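/- Fix η > 0, 0 ≤ μ ≤ γ_0 with μη ≤ 1 and γ_0 η ≤ 1. Define γ_k = (1 - δ_k) γ_{k-1} + δ_k μ with δ_k = √(η γ_k) ∈ (0,1), and Γ_k = ∏_{t=1}^k (1 - δ_t). Then for all k ≥ 0, Γ_k ≤ min((1 - √(μη))^k, 4/(2 + k√(γ_0 η))²). -/

import Mathlib

theorem stmt9 (η μ : ℝ) (γ δ : ℕ → ℝ) (hη : 0 < η) (hμ : 0 ≤ μ) (hμγ : μ ≤ γ 0)
    (hμη : μ * η ≤ 1) (hγ0η : γ 0 * η ≤ 1)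
    (hδdef : ∀ k ≥ 1, δ k = Real.sqrt (η * γ k))
    (hγrec : ∀ k ≥ 1, γ k = (1 - δ k) * γ (k - 1) + δ k * μ)
    (hδ01 : ∀ k ≥ 1, 0 < δ k ∧ δ k < 1) (k : ℕ) :
    ∏ t ∈ Finset.Icc 1 k, (1 - δ t)
      ≤ min ((1 - Real.sqrt (μ * η)) ^ k)
            (4 / (2 + k * Real.sqrt (γ 0 * η)) ^ 2) := by
  set Γ : ℕ → ℝ := fun n => ∏ t ∈ Finset.Icc 1 n, (1 - δ t) with hΓdef
  have hΓ0 : Γ 0 = 1 := by simp [hΓdef]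
  have hΓrec : ∀ n : ℕ, Γ (n + 1) = Γ n * (1 - δ (n + 1)) := by
    intro n
    simp only [hΓdef]
    exact Finset.prod_Icc_succ_top (by omega) _
  -- γ n ≥ μ
  have hγμ : ∀ n, μ ≤ γ n := by
    intro n
    induction n with
    | zero => exact hμγ
    | succ m ih =>
      have hrec := hγrec (m + 1) (by omega)
      simp only [Nat.add_sub_cancel] at hrec
      have hd := hδ01 (m + 1) (by omega)
      nlinarith [hd.1, hd.2, ih]
  have hΓpos : ∀ n, 0 < Γ n := by
    intro n
    apply Finset.prod_pos
    intro t ht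
    have := hδ01 t (Finset.mem_Icc.mp ht).1
    linarith [this.2]
  have hΓle1 : ∀ n, Γ n ≤ 1 := by
    intro n
    apply Finset.prod_le_one
    · intro t ht
      have := hδ01 t (Finset.mem_Icc.mp ht).1
      linarith [this.2]
    · intro t ht
      have := hδ01 t (Finset.mem_Icc.mp ht).1
      linarith [this.1]
  -- γ n ≥ Γ n * γ 0
  have hγΓ : ∀ n, Γ n * γ 0 ≤ γ n := by
    intro n
    induction n with
    | zero => simp [hΓ0]
    | succ m ih =>
      have hrec := hγrec (m + 1) (by omega)
      simp only [Nat.add_sub_cancel] at hrec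
      have hd := hδ01 (m + 1) (by omega)
      rw [hΓrec]
      nlinarith [hd.1, hd.2, hΓpos m]
  -- first bound
  have bound1 : Γ k ≤ (1 - Real.sqrt (μ * η)) ^ k := by
    have h := Finset.prod_le_prod (f := fun t => 1 - δ t)
      (g := fun _ => 1 - Real.sqrt (μ * η)) (s := Finset.Icc 1 k)
      (by
        intro t ht
        have := hδ01 t (Finset.mem_Icc.mp ht).1
        show (0:ℝ) ≤ 1 - δ t
        linarith [this.2])
      (by
        intro t ht
        have ht1 := (Finset.mem_Icc.mp ht).1
        have hd := hδdef t ht1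
        have hle : μ * η ≤ η * γ t := by nlinarith [hγμ t]
        have : Real.sqrt (μ * η) ≤ Real.sqrt (η * γ t) := Real.sqrt_le_sqrt hle
        show 1 - δ t ≤ 1 - Real.sqrt (μ * η)
        rw [hd]
        linarith)
    simpa [Finset.prod_const, Nat.card_Icc] using h
  -- second bound
  set c : ℝ := Real.sqrt (γ 0 * η) with hcdef
  have hc : 0 ≤ c := Real.sqrt_nonneg _
  have hstep : ∀ n : ℕ, 1 / Real.sqrt (Γ n) + c / 2 ≤ 1 / Real.sqrt (Γ (n + 1)) := by
    intro n
    set s := Real.sqrt (Γ n) with hsdef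
    set t := Real.sqrt (Γ (n + 1)) with htdef
    have hs : 0 < s := Real.sqrt_pos.mpr (hΓpos n)
    have ht : 0 < t := Real.sqrt_pos.mpr (hΓpos (n + 1))
    have hs2 : s ^ 2 = Γ n := Real.sq_sqrt (hΓpos n).le
    have ht2 : t ^ 2 = Γ (n + 1) := Real.sq_sqrt (hΓpos (n + 1)).le
    have hd := hδ01 (n + 1) (by omega)
    have hts : t ≤ s := by
      apply Real.sqrt_le_sqrt
      rw [hΓrec]
      nlinarith [hΓpos n, hd.1, hd.2]
    -- δ (n+1) ≥ c * t
    have hδge : c * t ≤ δ (n + 1) := by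
      rw [hδdef (n + 1) (by omega)]
      have h1 : c * t = Real.sqrt (γ 0 * η * Γ (n + 1)) := by
        rw [hcdef, htdef, ← Real.sqrt_mul (mul_nonneg (hμ.trans hμγ) hη.le)]
      rw [h1]
      apply Real.sqrt_le_sqrt
      nlinarith [hγΓ (n + 1)]
    have hst : s ^ 2 - t ^ 2 = δ (n + 1) * s ^ 2 := by
      rw [hs2, ht2, hΓrec]; ring
    have key : c / 2 * (t * s) + t ≤ s := by
      nlinarith [mul_pos ht hs, sq_nonneg (s - t), hΓle1 n,
        mul_le_mul_of_nonneg_right hδge (sq_nonneg s)]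
    rw [div_add_div _ _ hs.ne' two_ne_zero, div_le_div_iff₀ (by positivity) ht]
    nlinarith [key, mul_pos ht hs]
  have hmain : ∀ n : ℕ, 1 + n * c / 2 ≤ 1 / Real.sqrt (Γ n) := by
    intro n
    induction n with
    | zero => simp [hΓ0]
    | succ m ih =>
      have := hstep m
      push_cast
      linarith
  -- conclude second bound
  have bound2 : Γ k ≤ 4 / (2 + k * c) ^ 2 := by
    set t := Real.sqrt (Γ k) with htdef
    have ht : 0 < t := Real.sqrt_pos.mpr (hΓpos k)
    have ht2 : t ^ 2 = Γ k := Real.sq_sqrt (hΓpos k).le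
    have h := hmain k
    have hkc : (0:ℝ) ≤ (k : ℝ) * c := by positivity
    have h' : (1 + (k : ℝ) * c / 2) * t ≤ 1 := by
      rw [← htdef] at h
      exact (le_div_iff₀ ht).mp h
    rw [← ht2, le_div_iff₀ (by positivity)]
    nlinarith [h', ht.le, hkc, mul_le_mul h' h' (by positivity) (by norm_num)]
  exact le_min bound1 bound2
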